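/- For the path P_n on n vertices, the burning number equals ⌈√n⌉. -/

import Mathlib

/-- The set of burned vertices after `t` rounds, given fire sources `x`. -/
def burnedSet {V : Type*} (G : SimpleGraph V) {k : ℕ} (x : Fin k → V) : ℕ → Set V
  | 0 => ∅
  | t + 1 =>
      burnedSet G x t ∪ {v | ∃ u ∈ burnedSet G x t, G.Adj u v} ∪
        {v | ∃ h : t < k, v = x ⟨t, h⟩}

/-- `x` is a burning sequence: each source is unburned when chosen, and after
round `k` every vertex is burned. -/
def IsBurningSeq {V : Type*} (G : SimpleGraph V) {k : ℕ} (x : Fin k → V) : Prop :=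
  (∀ i : Fin k, x i ∉ burnedSet G x i) ∧ burnedSet G x k = Set.univ

/-- The burning number: the least length of a burning sequence. -/
noncomputable def burningNumber {V : Type*} (G : SimpleGraph V) : ℕ :=
  sInf {k | ∃ x : Fin k → V, IsBurningSeq G x}

lemma mem_burnedSet_path {n k : ℕ} (x : Fin k → Fin n) (t : ℕ) (v : Fin n) :
    v ∈ burnedSet (SimpleGraph.pathGraph n) x t ↔
      ∃ i : Fin k, (i : ℕ) + 1 ≤ t ∧ (x i).val ≤ v.val + (t - 1 - i) ∧
        v.val ≤ (x i).val + (t - 1 - i) := by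
  induction t generalizing v with
  | zero => simp [burnedSet]
  | succ t ih =>
    constructor
    · rintro ((h | ⟨u, hu, hadj⟩) | ⟨h, rfl⟩)
      · obtain ⟨i, hi, h1, h2⟩ := (ih v).1 h
        exact ⟨i, by omega, by omega, by omega⟩
      · obtain ⟨i, hi, h1, h2⟩ := (ih u).1 hu
        rw [SimpleGraph.pathGraph_adj] at hadj
        exact ⟨i, by omega, by omega, by omega⟩
      · exact ⟨⟨t, h⟩, by simp, by simp, by simp⟩
    · rintro ⟨i, hi, h1, h2⟩
      by_cases hit : (i : ℕ) = t
      · have hk : t < k := by omega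
        right
        refine ⟨hk, ?_⟩
        have hix : (⟨t, hk⟩ : Fin k) = i := Fin.ext (by simpa using hit.symm)
        rw [hix]
        exact (Fin.ext (by omega)).symm
      · left
        have hit' : (i : ℕ) + 1 ≤ t := by omega
        by_cases hcl : (x i).val ≤ v.val + (t - 1 - i) ∧ v.val ≤ (x i).val + (t - 1 - i)
        · exact Or.inl ((ih v).2 ⟨i, hit', hcl.1, hcl.2⟩)
        · right
          rcases lt_or_ge v.val (x i).val with hlt | hle
          · -- v is left of x i; neighbor u = v+1
            have hd : v.val + (t - i) = (x i).val := by omega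
            have hvn : v.val + 1 < n := by have := (x i).isLt; omega
            refine ⟨⟨v.val + 1, hvn⟩, (ih _).2 ⟨i, hit', ?_, ?_⟩, ?_⟩
            · show (x i).val ≤ v.val + 1 + (t - 1 - i); omega
            · show v.val + 1 ≤ (x i).val + (t - 1 - i); omega
            · rw [SimpleGraph.pathGraph_adj]; right; simp
          · -- v is right of x i; neighbor u = v-1
            have hd : v.val = (x i).val + (t - i) := by omega
            have hv1 : 1 ≤ v.val := by omega
            refine ⟨⟨v.val - 1, by omega⟩, (ih _).2 ⟨i, hit', ?_, ?_⟩, ?_⟩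
            · show (x i).val ≤ v.val - 1 + (t - 1 - i); omega
            · show v.val - 1 ≤ (x i).val + (t - 1 - i); omega
            · rw [SimpleGraph.pathGraph_adj]; left; simp; omega

lemma sum_odd (k : ℕ) : ∑ j ∈ Finset.range k, (2 * j + 1) = k ^ 2 := by
  induction k with
  | zero => simp
  | succ k ih => rw [Finset.sum_range_succ, ih]; ring

lemma lower_bound {n k : ℕ} (x : Fin k → Fin n)
    (h : ∀ v : Fin n, ∃ i : Fin k,
      (x i).val ≤ v.val + (k - 1 - i) ∧ v.val ≤ (x i).val + (k - 1 - i)) :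
    n ≤ k ^ 2 := by
  classical
  have hcard : (Finset.univ : Finset (Fin n)).card ≤
      ∑ i : Fin k, (2 * (k - 1 - (i : ℕ)) + 1) := by
    have hsub : (Finset.univ : Finset (Fin n)) ⊆
        Finset.univ.biUnion (fun i : Fin k => Finset.univ.filter
          (fun v : Fin n => (x i).val ≤ v.val + (k - 1 - i) ∧ v.val ≤ (x i).val + (k - 1 - i))) := by
      intro v _
      obtain ⟨i, h1, h2⟩ := h v
      exact Finset.mem_biUnion.2 ⟨i, Finset.mem_univ _, Finset.mem_filter.2 ⟨Finset.mem_univ _, h1, h2⟩⟩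
    calc (Finset.univ : Finset (Fin n)).card ≤ _ := Finset.card_le_card hsub
      _ ≤ ∑ i : Fin k, _ := Finset.card_biUnion_le
      _ ≤ ∑ i : Fin k, (2 * (k - 1 - (i : ℕ)) + 1) := by
          apply Finset.sum_le_sum
          intro i _
          set r := k - 1 - (i : ℕ)
          set c := (x i).val
          have : (Finset.univ.filter
              (fun v : Fin n => c ≤ v.val + r ∧ v.val ≤ c + r)).card ≤
              (Finset.Icc (c - r) (c + r)).card := by
            apply Finset.card_le_card_of_injOn (fun v => v.val)
            · intro v hv
              simp only [Finset.mem_coe, Finset.mem_filter] at hv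
              simp only [Finset.mem_coe, Finset.mem_Icc]
              omega
            · intro a _ b _ hab
              exact Fin.ext hab
          have hIcc : (Finset.Icc (c - r) (c + r)).card = c + r + 1 - (c - r) :=
            Nat.card_Icc _ _
          omega
  have hsum : ∑ i : Fin k, (2 * (k - 1 - (i : ℕ)) + 1) = k ^ 2 := by
    rw [Fin.sum_univ_eq_sum_range (fun j => 2 * (k - 1 - j) + 1) k]
    rw [← sum_odd k, ← Finset.sum_range_reflect]
    apply Finset.sum_congr rfl
    intro j hj
    simp at hj
    omega
  simpa [hsum] using hcard

lemma gap_lemma {n k j j' : ℕ} (hm : (k-1)*(k-1) ≤ n - 1) (hjj : j < j') (hj' : j' ≤ k - 1) :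
    min (j*(j+1)) (n-1) + j' ≤ min (j'*(j'+1)) (n-1) + j := by
  have e1 : j*(j+1) + j' ≤ j'*(j'+1) + j := by nlinarith
  have hjm : j + 1 ≤ k - 1 := le_trans hjj hj'
  obtain ⟨m, hmk⟩ : ∃ m, k - 1 = m := ⟨k-1, rfl⟩
  rw [hmk] at hm hj' hjm
  obtain ⟨d, rfl⟩ := Nat.exists_eq_add_of_le hjm
  have e2 : j*(j+1) + (j+1+d) ≤ (j+1+d)*(j+1+d) + j := by nlinarith
  rcases le_total (j'*(j'+1)) (n-1) with h | h
  · have hb : min (j'*(j'+1)) (n-1) = j'*(j'+1) := min_eq_left h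
    have ha : min (j*(j+1)) (n-1) ≤ j*(j+1) := min_le_left _ _
    omega
  · have hb : min (j'*(j'+1)) (n-1) = n-1 := min_eq_right h
    have ha : min (j*(j+1)) (n-1) ≤ j*(j+1) := min_le_left _ _
    omega

lemma exists_burning {n k : ℕ} (hn : 1 ≤ n) (hk : 1 ≤ k) (hk1 : (k-1)*(k-1) ≤ n - 1)
    (hk2 : n ≤ k * k) :
    ∃ x : Fin k → Fin n, IsBurningSeq (SimpleGraph.pathGraph n) x := by
  refine ⟨fun i => ⟨min ((k-1-(i:ℕ))*((k-1-(i:ℕ))+1)) (n-1), by omega⟩, ?_, ?_⟩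
  · intro i
    rw [mem_burnedSet_path]
    rintro ⟨i', hi', hb1, hb2⟩
    simp only at hb1 hb2
    have hik : (i : ℕ) < k := i.isLt
    have hgap := gap_lemma (n := n) (k := k) (j := k-1-(i:ℕ)) (j' := k-1-(i':ℕ))
      hk1 (by omega) (by omega)
    omega
  · rw [Set.eq_univ_iff_forall]
    intro v
    rw [mem_burnedSet_path]
    have hv1 : Nat.sqrt v.val * Nat.sqrt v.val ≤ v.val := by
      have := Nat.sqrt_le' v.val; rwa [pow_two] at this
    have hv2 : v.val < (Nat.sqrt v.val + 1) * (Nat.sqrt v.val + 1) := by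
      have := Nat.lt_succ_sqrt' v.val; rwa [Nat.succ_eq_add_one, pow_two] at this
    have hvn : v.val < n := v.isLt
    have hjk : Nat.sqrt v.val < k := by
      rw [Nat.sqrt_lt', pow_two]
      omega
    set j := Nat.sqrt v.val with hj
    refine ⟨⟨k - 1 - j, by omega⟩, by simp; omega, ?_, ?_⟩
    · show min ((k-1-(k-1-j))*((k-1-(k-1-j))+1)) (n-1) ≤ v.val + (k - 1 - (k-1-j))
      have h1 : k-1-(k-1-j) = j := by omega
      rw [h1]
      have hprod : j*(j+1) = j*j + j := by ring
      have hprod2 : (j+1)*(j+1) = j*j + 2*j + 1 := by ring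
      rcases le_total (j*(j+1)) (n-1) with h | h
      · rw [min_eq_left h]; omega
      · rw [min_eq_right h]; omega
    · show v.val ≤ min ((k-1-(k-1-j))*((k-1-(k-1-j))+1)) (n-1) + (k - 1 - (k-1-j))
      have h1 : k-1-(k-1-j) = j := by omega
      rw [h1]
      have hprod : j*(j+1) = j*j + j := by ring
      have hprod2 : (j+1)*(j+1) = j*j + 2*j + 1 := by ring
      rcases le_total (j*(j+1)) (n-1) with h | h
      · rw [min_eq_left h]; omega
      · rw [min_eq_right h]; omega

/-- The burning number of the path on `n` vertices is `⌈√n⌉`. -/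
theorem burningNumber_pathGraph (n : ℕ) (hn : 1 ≤ n) :
    burningNumber (SimpleGraph.pathGraph n) = ⌈Real.sqrt n⌉₊ := by
  have key : ∀ k : ℕ, ⌈Real.sqrt n⌉₊ ≤ k ↔ n ≤ k ^ 2 := by
    intro k
    rw [Nat.ceil_le, Real.sqrt_le_iff]
    have hcast : ((k : ℝ)) ^ 2 = ((k ^ 2 : ℕ) : ℝ) := by push_cast; ring
    rw [hcast, Nat.cast_le]
    simp [Nat.cast_nonneg]
  set m := ⌈Real.sqrt n⌉₊ with hm
  have hm1 : 1 ≤ m := by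
    by_contra h
    have h0 : m ≤ 0 := by omega
    have := (key 0).1 h0
    simp at this
    omega
  have hmm : n ≤ m ^ 2 := (key m).1 le_rfl
  have hm2 : (m-1)*(m-1) ≤ n - 1 := by
    by_contra h
    have h1 : n ≤ (m-1)*(m-1) := by omega
    have h2 : n ≤ (m-1) ^ 2 := by rw [pow_two]; exact h1
    have := (key (m-1)).2 h2
    omega
  obtain ⟨x, hx⟩ := exists_burning hn hm1 hm2 (by rw [← pow_two]; exact hmm)
  apply le_antisymm
  · exact Nat.sInf_le ⟨x, hx⟩
  · refine le_csInf ⟨m, ⟨x, hx⟩⟩ ?_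
    rintro k ⟨y, hy1, hy2⟩
    apply (key k).2
    apply lower_bound y
    intro v
    have hv : v ∈ burnedSet (SimpleGraph.pathGraph n) y k := by
      rw [hy2]; trivial
    obtain ⟨i, -, h1, h2⟩ := (mem_burnedSet_path y k v).1 hv
    exact ⟨i, h1, h2⟩
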